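/- (Theorem 2.2, general Selection-Adjusted Procedure.) Let the families of p-values be independent across families, let S be an arbitrary selection rule, and for each selected family i define R_min(P^{(i)}) = min over p-value configurations p of family i such that i ∈ S(P^{(i)}, p) of |S(P^{(i)}, p)|. If each selected family i is tested by an E(C)-controlling procedure at level R_min(P^{(i)})·q/m (so E(C_i) ≤ α whenever the level α is used, and C_i = 0 for unselected families), then E( Σ_{i∈S(P)} C_i / max(|S(P)|,1) ) ≤ q. -/

import Mathlib

open MeasureTheory
open scoped ENNReal

/-- Theorem 2.2 (general Selection-Adjusted Procedure).  Families of p-values are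
independent across families; `S` is an arbitrary selection rule.  For each family `i`
and configuration `x`, `R_min(P^{(i)})` is the minimal number of selected families over
family-`i` p-value vectors keeping `i` selected (a function of the p-values outside
family `i` only).  If each selected family `i` is tested by an `E(𝒞)`-controlling
procedure at level `R_min(P^{(i)}) q / m` — so that conditionally on the p-values of
the other families `E(C i) ≤ R_min(P^{(i)}) q / m` — and `C i = 0` for unselected
families, then the expected average error over the selected families is at most `q`. -/
theorem stmt9 {m : ℕ} (hm : 1 ≤ m) {E : Fin m → Type*} [∀ i, MeasurableSpace (E i)]
    (ν : ∀ i, Measure (E i)) [∀ i, IsProbabilityMeasure (ν i)]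
    (q : ℝ) (hq : 0 < q)
    (S : (∀ i, E i) → Finset (Fin m))
    (hSmeas : ∀ i, MeasurableSet {x | i ∈ S x})
    (hScard : Measurable fun x => (S x).card)
    (C : Fin m → (∀ j, E j) → ℝ)
    (hCmeas : ∀ i, Measurable (C i))
    (hCnonneg : ∀ i x, 0 ≤ C i x)
    (hCzero : ∀ i x, i ∉ S x → C i x = 0)
    (hcontrol : ∀ (i : Fin m) (x : ∀ j, E j),
      (∫ p, C i (Function.update x i p) ∂ ν i) ≤
        (sInf {r : ℕ | ∃ p : E i, i ∈ S (Function.update x i p) ∧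
          (S (Function.update x i p)).card = r} : ℕ) * q / m) :
    (∫ x, (∑ i ∈ S x, C i x) / ((max (S x).card 1 : ℕ) : ℝ) ∂ Measure.pi ν) ≤ q := by
  obtain ⟨n, rfl⟩ : ∃ n, m = n + 1 := ⟨m - 1, by omega⟩
  set μ := Measure.pi ν with hμ
  set f : (∀ j, E j) → ℝ :=
    fun x => (∑ i ∈ S x, C i x) / ((max (S x).card 1 : ℕ) : ℝ) with hf
  -- basic facts about f
  have hfnn : ∀ x, 0 ≤ f x := fun x =>
    div_nonneg (Finset.sum_nonneg fun i _ => hCnonneg i x) (by positivity)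
  have hfmeas : Measurable f := by
    have h1 : Measurable fun x => ∑ i ∈ S x, C i x := by
      have : (fun x => ∑ i ∈ S x, C i x)
          = fun x => ∑ i : Fin (n+1), if i ∈ S x then C i x else 0 := by
        funext x
        rw [Finset.sum_ite_mem, Finset.univ_inter]
      rw [this]
      exact Finset.measurable_sum _ fun i _ =>
        Measurable.ite (hSmeas i) (hCmeas i) measurable_const
    have h2 : Measurable fun x => ((max (S x).card 1 : ℕ) : ℝ) :=
      (measurable_from_top (f := fun k : ℕ => ((max k 1 : ℕ) : ℝ))).comp hScard
    exact h1.div h2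
  by_cases hInt : Integrable f μ
  swap
  · rw [show (∫ x, (∑ i ∈ S x, C i x) / ((max (S x).card 1 : ℕ) : ℝ) ∂ Measure.pi ν)
        = ∫ x, f x ∂μ from rfl, integral_undef hInt]
    exact hq.le
  -- the dominating functions
  set G : Fin (n+1) → (∀ j, E j) → ℝ≥0∞ :=
    fun i x => (if i ∈ S x then (((S x).card : ℝ≥0∞))⁻¹ else 0) * ENNReal.ofReal (C i x)
    with hG
  have hGmeas : ∀ i, Measurable (G i) := by
    intro i
    apply Measurable.mul
    · exact Measurable.ite (hSmeas i)
        ((measurable_from_top (f := fun k : ℕ => ((k : ℝ≥0∞))⁻¹)).comp hScard)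
        measurable_const
    · exact ENNReal.measurable_ofReal.comp (hCmeas i)
  -- pointwise domination
  have hdom : ∀ x, ENNReal.ofReal (f x) ≤ ∑ i : Fin (n+1), G i x := by
    intro x
    rcases Finset.eq_empty_or_nonempty (S x) with hS | hS
    · simp [hf, hS]
    · have hcard : 1 ≤ (S x).card := Finset.card_pos.mpr hS
      have hmax : max (S x).card 1 = (S x).card := max_eq_left hcard
      have hcpos : (0 : ℝ) < ((S x).card : ℝ) := by exact_mod_cast hcard
      have : ENNReal.ofReal (f x)
          = ∑ i ∈ S x, ENNReal.ofReal (C i x / ((S x).card : ℝ)) := by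
        rw [hf]
        simp only [hmax, Finset.sum_div]
        exact ENNReal.ofReal_sum_of_nonneg fun i _ =>
          div_nonneg (hCnonneg i x) hcpos.le
      rw [this]
      refine le_trans (Finset.sum_le_sum fun i hi => ?_)
        (Finset.sum_le_sum_of_subset_of_nonneg (Finset.subset_univ _)
          fun i _ _ => zero_le)
      have : ENNReal.ofReal (C i x / ((S x).card : ℝ))
          = (((S x).card : ℝ≥0∞))⁻¹ * ENNReal.ofReal (C i x) := by
        rw [div_eq_mul_inv, ENNReal.ofReal_mul' (inv_nonneg.mpr hcpos.le),
          ENNReal.ofReal_inv_of_pos hcpos, ENNReal.ofReal_natCast, mul_comm]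
      rw [this, hG]
      simp [hi]
  -- each G i has small integral
  have hGint : ∀ i : Fin (n+1), (∫⁻ x, G i x ∂μ) ≤ ENNReal.ofReal (q / ((n+1 : ℕ) : ℝ)) := by
    intro i
    -- C i is integrable
    have hCi_int : Integrable (C i) μ := by
      refine Integrable.mono' (hInt.const_mul ((n+1 : ℕ) : ℝ)) (hCmeas i).aestronglyMeasurable
        (Filter.Eventually.of_forall fun x => ?_)
      rw [Real.norm_eq_abs, abs_of_nonneg (hCnonneg i x)]
      by_cases hi : i ∈ S x
      · have hDle : ((max (S x).card 1 : ℕ) : ℝ) ≤ ((n+1 : ℕ) : ℝ) := by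
          have h1 : (S x).card ≤ n+1 := by
            simpa using Finset.card_le_card (Finset.subset_univ (S x))
          exact_mod_cast max_le h1 hm
        have hDpos : (0 : ℝ) < ((max (S x).card 1 : ℕ) : ℝ) := by
          have : 1 ≤ max (S x).card 1 := le_max_right _ _
          exact_mod_cast this
        have h2 : C i x ≤ ((max (S x).card 1 : ℕ) : ℝ) * f x := by
          rw [hf, mul_div_cancel₀ _ hDpos.ne']
          exact Finset.single_le_sum (fun j _ => hCnonneg j x) hi
        exact h2.trans (mul_le_mul_of_nonneg_right hDle (hfnn x))
      · rw [hCzero i x hi]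
        exact mul_nonneg (by positivity) (hfnn x)
    -- split off coordinate i
    set e := MeasurableEquiv.piFinSuccAbove E i with he
    set Q := Measure.pi (fun j => ν (i.succAbove j)) with hQ
    have hMP : MeasurePreserving e μ ((ν i).prod Q) :=
      measurePreserving_piFinSuccAbove ν i
    have hMPsymm : MeasurePreserving e.symm ((ν i).prod Q) μ :=
      MeasurePreserving.symm e hMP
    have hesymm : ∀ z : E i × (∀ j, E (i.succAbove j)), e.symm z = i.insertNth z.1 z.2 := by
      intro z; rfl
    have hstep1 : (∫⁻ x, G i x ∂μ) = ∫⁻ z, G i (e.symm z) ∂((ν i).prod Q) := by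
      have h := hMP.lintegral_comp ((hGmeas i).comp e.symm.measurable)
      simpa [Function.comp] using h
    have hstep2 : (∫⁻ z, G i (e.symm z) ∂((ν i).prod Q))
        = ∫⁻ r, ∫⁻ a, G i (e.symm (a, r)) ∂(ν i) ∂Q :=
      lintegral_prod_symm' _ ((hGmeas i).comp e.symm.measurable)
    -- fiberwise integrability a.e.
    have hfib : ∀ᵐ r ∂Q, Integrable (fun a => C i (e.symm (a, r))) (ν i) := by
      have : Integrable ((C i) ∘ e.symm) ((ν i).prod Q) :=
        (hMPsymm.integrable_comp_emb e.symm.measurableEmbedding).mpr hCi_int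
      exact this.prod_left_ae
    -- a.e. bound on inner integral
    have hae : ∀ᵐ r ∂Q, (∫⁻ a, G i (e.symm (a, r)) ∂(ν i)) ≤ ENNReal.ofReal (q / ((n+1 : ℕ) : ℝ)) := by
      filter_upwards [hfib] with r hr
      have hnE : Nonempty (E i) := Measure.nonempty_of_neZero (ν i)
      obtain ⟨a₀⟩ := hnE
      set x₀ : ∀ j, E j := i.insertNth a₀ r with hx₀
      have hupd : ∀ a : E i, e.symm (a, r) = Function.update x₀ i a := by
        intro a
        rw [hesymm, hx₀, Fin.update_insertNth]
      set ρ : ℕ := sInf {k : ℕ | ∃ p : E i, i ∈ S (Function.update x₀ i p) ∧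
          (S (Function.update x₀ i p)).card = k} with hρ
      have hpt : ∀ a : E i, G i (e.symm (a, r))
          ≤ ((ρ : ℝ≥0∞))⁻¹ * ENNReal.ofReal (C i (Function.update x₀ i a)) := by
        intro a
        rw [hupd a, hG]
        by_cases hi : i ∈ S (Function.update x₀ i a)
        · simp only [hi, if_true]
          refine mul_le_mul_left ?_ _
          refine ENNReal.inv_le_inv.mpr ?_
          refine Nat.cast_le.mpr (Nat.sInf_le ?_)
          exact ⟨a, hi, rfl⟩
        · simp [hi]
      calc (∫⁻ a, G i (e.symm (a, r)) ∂(ν i))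
          ≤ ∫⁻ a, ((ρ : ℝ≥0∞))⁻¹ * ENNReal.ofReal (C i (Function.update x₀ i a)) ∂(ν i) :=
            lintegral_mono hpt
        _ = ((ρ : ℝ≥0∞))⁻¹ * ∫⁻ a, ENNReal.ofReal (C i (Function.update x₀ i a)) ∂(ν i) := by
            have hmf : Measurable fun a => ENNReal.ofReal (C i (Function.update x₀ i a)) :=
              ENNReal.measurable_ofReal.comp ((hCmeas i).comp (measurable_update x₀))
            rw [lintegral_const_mul _ hmf]
        _ ≤ ((ρ : ℝ≥0∞))⁻¹ * ENNReal.ofReal ((ρ : ℝ) * q / ((n+1 : ℕ) : ℝ)) := by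
            refine mul_le_mul_right ?_ _
            have hint' : Integrable (fun a => C i (Function.update x₀ i a)) (ν i) := by
              refine hr.congr (Filter.Eventually.of_forall fun a => ?_)
              simp only [hupd]
            rw [← ofReal_integral_eq_lintegral_ofReal hint'
              (Filter.Eventually.of_forall fun a => hCnonneg i _)]
            exact ENNReal.ofReal_le_ofReal (hcontrol i x₀)
        _ ≤ ENNReal.ofReal (q / ((n+1 : ℕ) : ℝ)) := by
            rcases Nat.eq_zero_or_pos ρ with h0 | hpos
            · simp [h0]
            · have hρ0 : ((ρ : ℝ≥0∞)) ≠ 0 := by exact_mod_cast hpos.ne'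
              have : ENNReal.ofReal ((ρ : ℝ) * q / ((n+1 : ℕ) : ℝ))
                  = (ρ : ℝ≥0∞) * ENNReal.ofReal (q / ((n+1 : ℕ) : ℝ)) := by
                rw [mul_div_assoc, ENNReal.ofReal_mul (by positivity), ENNReal.ofReal_natCast]
              rw [this, ← mul_assoc, ENNReal.inv_mul_cancel hρ0 (ENNReal.natCast_ne_top ρ),
                one_mul]
    -- conclude for G i
    rw [hstep1, hstep2]
    calc (∫⁻ r, ∫⁻ a, G i (e.symm (a, r)) ∂(ν i) ∂Q)
        ≤ ∫⁻ _, ENNReal.ofReal (q / ((n+1 : ℕ) : ℝ)) ∂Q := lintegral_mono_ae hae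
      _ = ENNReal.ofReal (q / ((n+1 : ℕ) : ℝ)) := by simp
  -- put everything together
  have hlin : (∫⁻ x, ENNReal.ofReal (f x) ∂μ) ≤ ENNReal.ofReal q := by
    calc (∫⁻ x, ENNReal.ofReal (f x) ∂μ)
        ≤ ∫⁻ x, ∑ i : Fin (n+1), G i x ∂μ := lintegral_mono hdom
      _ = ∑ i : Fin (n+1), ∫⁻ x, G i x ∂μ :=
          lintegral_finset_sum _ fun i _ => hGmeas i
      _ ≤ ∑ _i : Fin (n+1), ENNReal.ofReal (q / ((n+1 : ℕ) : ℝ)) := Finset.sum_le_sum fun i _ => hGint i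
      _ = ((n+1 : ℕ) : ℝ≥0∞) * ENNReal.ofReal (q / ((n+1 : ℕ) : ℝ)) := by
          simp [mul_comm]
      _ = ENNReal.ofReal q := by
          rw [← ENNReal.ofReal_natCast (n+1), ← ENNReal.ofReal_mul (by positivity)]
          congr 1
          field_simp
  have : (∫ x, f x ∂μ) ≤ q := by
    rw [integral_eq_lintegral_of_nonneg_ae (Filter.Eventually.of_forall hfnn)
      hfmeas.aestronglyMeasurable]
    exact ENNReal.toReal_le_of_le_ofReal hq.le hlin
  exact this
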